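/- With f = [[0, 0, -z, -z²/2], [2z, -z², 0, 0]], f^♯ = J₄ fᵗ J₂, g = (z³/3)·diag(-1, 1), J̌₄ = diag-blocks with (J̌₄)₁₁ = 1, (J̌₄)₂₃ = (J̌₄)₃₂ = 1, (J̌₄)₄₄ = 1, and r = |z|, the matrix d = I₂ + f̄^{t♯} J̌₄ f^♯ + ḡᵗ g equals [[1 + 4r² + r⁶/9, r²z̄], [r²z, 1 + r⁴/4 + r⁶/9]], and its determinant is (1 + 4r² + r⁴/4 + r⁶/9)(1 + r⁶/9). -/

import Mathlib

open Matrix Complex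

/-- The `n×n` anti-diagonal matrix of ones. -/
def Jmat (n : ℕ) : Matrix (Fin n) (Fin n) ℂ :=
  Matrix.of fun i j => if (i : ℕ) + (j : ℕ) = n - 1 then 1 else 0

/-- `f^♯ = J₄ fᵀ J₂`. -/
noncomputable def sharp (f : Matrix (Fin 2) (Fin 4) ℂ) : Matrix (Fin 4) (Fin 2) ℂ :=
  Jmat 4 * fᵀ * Jmat 2

/-- The matrix `J̌₄`. -/
def J4check : Matrix (Fin 4) (Fin 4) ℂ := !![1, 0, 0, 0; 0, 0, 1, 0; 0, 1, 0, 0; 0, 0, 0, 1]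

noncomputable def fEx (z : ℂ) : Matrix (Fin 2) (Fin 4) ℂ :=
  !![0, 0, -z, -z ^ 2 / 2; 2 * z, -z ^ 2, 0, 0]

noncomputable def gEx (z : ℂ) : Matrix (Fin 2) (Fin 2) ℂ :=
  (z ^ 3 / 3) • !![-1, 0; 0, 1]

/-- Entrywise complex conjugate of a matrix. -/
noncomputable def mconj {m n : Type*} (A : Matrix m n ℂ) : Matrix m n ℂ :=
  A.map (starRingEnd ℂ)

/-- Computation of `d = I₂ + f̄^{t♯} J̌₄ f^♯ + ḡᵗ g` and its determinant, with `r = |z|`. -/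
theorem dEx_formula (z : ℂ) :
    (1 : Matrix (Fin 2) (Fin 2) ℂ) + (sharp (mconj (fEx z)))ᵀ * J4check * sharp (fEx z)
        + (mconj (gEx z))ᵀ * gEx z
      = !![1 + 4 * (‖z‖ : ℂ) ^ 2 + (‖z‖ : ℂ) ^ 6 / 9,
            (‖z‖ : ℂ) ^ 2 * (starRingEnd ℂ) z;
           (‖z‖ : ℂ) ^ 2 * z,
            1 + (‖z‖ : ℂ) ^ 4 / 4 + (‖z‖ : ℂ) ^ 6 / 9] ∧
    ((1 : Matrix (Fin 2) (Fin 2) ℂ) + (sharp (mconj (fEx z)))ᵀ * J4check * sharp (fEx z)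
        + (mconj (gEx z))ᵀ * gEx z).det
      = (1 + 4 * (‖z‖ : ℂ) ^ 2 + (‖z‖ : ℂ) ^ 4 / 4
          + (‖z‖ : ℂ) ^ 6 / 9) * (1 + (‖z‖ : ℂ) ^ 6 / 9) := by
  have habs : ((‖z‖ : ℂ)) ^ 2 = (starRingEnd ℂ) z * z := by
    rw [← Complex.normSq_eq_conj_mul_self]; norm_cast; exact Complex.sq_norm z
  have h : (1 : Matrix (Fin 2) (Fin 2) ℂ) + (sharp (mconj (fEx z)))ᵀ * J4check * sharp (fEx z)
        + (mconj (gEx z))ᵀ * gEx z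
      = !![1 + 4 * (‖z‖ : ℂ) ^ 2 + (‖z‖ : ℂ) ^ 6 / 9,
            (‖z‖ : ℂ) ^ 2 * (starRingEnd ℂ) z;
           (‖z‖ : ℂ) ^ 2 * z,
            1 + (‖z‖ : ℂ) ^ 4 / 4 + (‖z‖ : ℂ) ^ 6 / 9] := by
    ext i j
    fin_cases i <;> fin_cases j <;>
      simp [sharp, mconj, fEx, gEx, J4check, Jmat, Matrix.mul_apply, Fin.sum_univ_succ,
        Matrix.one_apply, _root_.map_mul, map_pow, Complex.conj_ofNat]
    · linear_combination (-4 - (((‖z‖ : ℂ))^4 + ((‖z‖ : ℂ))^2 * ((starRingEnd ℂ) z * z)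
        + ((starRingEnd ℂ) z * z)^2) / 9) * habs
    · linear_combination (-(starRingEnd ℂ) z) * habs
    · linear_combination (-z) * habs
    · linear_combination (-(((‖z‖ : ℂ))^2 + (starRingEnd ℂ) z * z) / 4
        - (((‖z‖ : ℂ))^4 + ((‖z‖ : ℂ))^2 * ((starRingEnd ℂ) z * z)
        + ((starRingEnd ℂ) z * z)^2) / 9) * habs
  refine ⟨h, ?_⟩
  rw [h, Matrix.det_fin_two_of]
  linear_combination ((‖z‖ : ℂ))^4 * habs
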